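/- For every σ∈(0,1), with τ=√(1-σ²): (1/τ³)·(1 - (2/π)(τ + (1/σ)arctan(σ/τ))) = -(16/π)∫₀¹ (1-t)²(1+t²)t / ((1+t²)²-4t²σ²)² dt. In particular this quantity is negative and decreasing in σ. -/

import Mathlib

open Real

noncomputable def P (σ : ℝ) : ℝ :=
  (1 / Real.sqrt (1 - σ ^ 2) ^ 3) *
    (1 - (2 / π) * (Real.sqrt (1 - σ ^ 2) +
      (1 / σ) * Real.arctan (σ / Real.sqrt (1 - σ ^ 2))))

noncomputable def Faux (σ τ t : ℝ) : ℝ :=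
  ((1-σ)/(8*σ*τ^3)) * Real.arctan ((t-σ)/τ) - ((1+σ)/(8*σ*τ^3)) * Real.arctan ((t+σ)/τ)
  + ((1-σ)/(8*σ*(1-σ^2))) * ((1-σ*t)/(1-2*σ*t+t^2))
  - ((1+σ)/(8*σ*(1-σ^2))) * ((1+σ*t)/(1+2*σ*t+t^2))

lemma arctan_shift_deriv (c τ : ℝ) (hτ : 0 < τ) (x : ℝ) :
    HasDerivAt (fun t => Real.arctan ((t-c)/τ)) (τ/((x-c)^2+τ^2)) x := by
  have h := (Real.hasDerivAt_arctan ((x-c)/τ)).comp x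
    (((hasDerivAt_id x).sub_const c).div_const τ)
  refine h.congr_deriv ?_
  have h1 : (x-c)^2+τ^2 > 0 := by positivity
  field_simp
  ring

lemma Faux_deriv (σ τ : ℝ) (hσ0 : 0 < σ) (hσ1 : σ < 1) (hτ0 : 0 < τ)
    (hτ2 : τ^2 = 1 - σ^2) (t : ℝ) :
    HasDerivAt (Faux σ τ)
      ((1-t)^2*(1+t^2)*t/((1+t^2)^2-4*t^2*σ^2)^2) t := by
  have hm : (0:ℝ) < 1-2*σ*t+t^2 := by nlinarith [sq_nonneg (t-σ), sq_nonneg σ]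
  have hp : (0:ℝ) < 1+2*σ*t+t^2 := by nlinarith [sq_nonneg (t+σ), sq_nonneg σ]
  have h1 := arctan_shift_deriv σ τ hτ0 t
  have h2 : HasDerivAt (fun t => Real.arctan ((t+σ)/τ)) (τ/((t+σ)^2+τ^2)) t := by
    simpa [sub_neg_eq_add] using arctan_shift_deriv (-σ) τ hτ0 t
  have hn3 : HasDerivAt (fun t : ℝ => 1-σ*t) (-σ) t := by
    exact (((hasDerivAt_id t).const_mul σ).const_sub 1).congr_deriv (by ring)
  have hd3 : HasDerivAt (fun t : ℝ => 1-2*σ*t+t^2) (-(2*σ)+2*t) t := by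
    have := (((hasDerivAt_id t).const_mul (2*σ)).const_sub 1).add
      ((hasDerivAt_id t).pow 2)
    exact this.congr_deriv (by norm_num [id] <;> ring)
  have h3 := hn3.div hd3 hm.ne'
  have hn4 : HasDerivAt (fun t : ℝ => 1+σ*t) σ t := by
    exact (((hasDerivAt_id t).const_mul σ).const_add 1).congr_deriv (by ring)
  have hd4 : HasDerivAt (fun t : ℝ => 1+2*σ*t+t^2) ((2*σ)+2*t) t := by
    have := ((hasDerivAt_const t (1:ℝ)).add ((hasDerivAt_id t).const_mul (2*σ))).add
      ((hasDerivAt_id t).pow 2)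
    exact this.congr_deriv (by norm_num [id] <;> ring)
  have h4 := hn4.div hd4 hp.ne'
  have H := (((h1.const_mul ((1-σ)/(8*σ*τ^3))).sub
      (h2.const_mul ((1+σ)/(8*σ*τ^3)))).add
      (h3.const_mul ((1-σ)/(8*σ*(1-σ^2))))).sub
      (h4.const_mul ((1+σ)/(8*σ*(1-σ^2))))
  refine H.congr_deriv ?_
  have hD : (0:ℝ) < (1+t^2)^2-4*t^2*σ^2 := by
    have : (1+t^2)^2-4*t^2*σ^2 = (1-2*σ*t+t^2)*(1+2*σ*t+t^2) := by ring
    rw [this]; positivity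
  have hs2 : (0:ℝ) < 1 - σ^2 := by nlinarith
  rw [show τ^3 = τ*τ^2 by ring, hτ2]
  have e1 : (t-σ)^2+(1-σ^2) = 1-2*σ*t+t^2 := by ring
  have e2 : (t+σ)^2+(1-σ^2) = 1+2*σ*t+t^2 := by ring
  rw [e1, e2]
  rw [show (1+t^2)^2-4*t^2*σ^2 = (1-2*σ*t+t^2)*(1+2*σ*t+t^2) by ring]
  have hm' : (1:ℝ) - σ*2*t + t^2 ≠ 0 := by nlinarith
  have hp' : (1:ℝ) + σ*2*t + t^2 ≠ 0 := by nlinarith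
  field_simp [hm.ne', hp.ne', hτ0.ne', hσ0.ne', hs2.ne', hm', hp']
  ring

lemma eval_lemma (σ : ℝ) (hσ0 : 0 < σ) (hσ1 : σ < 1) :
    P σ = -(16/π) * (Faux σ (Real.sqrt (1-σ^2)) 1 - Faux σ (Real.sqrt (1-σ^2)) 0) := by
  have hs2 : (0:ℝ) < 1 - σ^2 := by nlinarith
  set τ := Real.sqrt (1-σ^2) with hτdef
  have hτ2 : τ^2 = 1 - σ^2 := Real.sq_sqrt hs2.le
  have hτ0 : 0 < τ := Real.sqrt_pos.2 hs2
  set a := Real.arctan ((1-σ)/τ) with hadef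
  have hx : 0 < (1-σ)/τ := div_pos (by linarith) hτ0
  have hπ : π ≠ 0 := Real.pi_ne_zero
  have key1 : Real.arctan ((1+σ)/τ) = π/2 - a := by
    have hinv : ((1-σ)/τ)⁻¹ = (1+σ)/τ := by
      rw [inv_div, div_eq_div_iff (by linarith) hτ0.ne']
      linear_combination hτ2
    rw [← hinv, Real.arctan_inv_of_pos hx, hadef]
  have key2 : Real.arctan (σ/τ) = π/2 - 2*a := by
    have h1 : Real.arctan (τ/σ) = π/2 - Real.arctan (σ/τ) := by
      have := Real.arctan_inv_of_pos (div_pos hσ0 hτ0)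
      rwa [inv_div] at this
    have hlt : (1-σ)/τ * ((1-σ)/τ) < 1 := by
      rw [div_mul_div_comm, div_lt_one (by positivity)]
      nlinarith
    have h2 := Real.arctan_add hlt
    have harg : ((1-σ)/τ + (1-σ)/τ) / (1 - (1-σ)/τ * ((1-σ)/τ)) = τ/σ := by
      rw [div_eq_div_iff (by linarith [hlt]) hσ0.ne']
      field_simp
      linear_combination (2*σ^2-2*σ-τ^2) * hτ2 + (2*σ-2*σ^2) * hτ2 + (τ^2-1) * hτ2
    rw [harg] at h2
    rw [← hadef] at h2
    linarith [h1, h2]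
  have hd1 : (1:ℝ)-2*σ*1+1^2 ≠ 0 := by nlinarith
  have hd2 : (1:ℝ)+2*σ*1+1^2 ≠ 0 := by nlinarith
  have h1m : (1:ℝ) - σ ≠ 0 := by linarith
  have h1p : (1:ℝ) + σ ≠ 0 := by linarith
  have F1 : Faux σ τ 1 = ((1-σ)*a - (1+σ)*(π/2-a))/(8*σ*τ^3) - 1/(8*τ^2) := by
    unfold Faux
    rw [key1, ← hadef, show (1:ℝ)-σ^2 = τ^2 from hτ2.symm,
      show ((1:ℝ)-σ*1)/(1-2*σ*1+1^2) = 1/2 from by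
        rw [div_eq_div_iff (by nlinarith) two_ne_zero]; ring,
      show ((1:ℝ)+σ*1)/(1+2*σ*1+1^2) = 1/2 from by
        rw [div_eq_div_iff (by nlinarith) two_ne_zero]; ring]
    field_simp
    ring
  have F0 : Faux σ τ 0 = -(π/2-2*a)/(4*σ*τ^3) - 1/(4*τ^2) := by
    unfold Faux
    rw [show ((0:ℝ)-σ)/τ = -(σ/τ) by ring, show ((0:ℝ)+σ)/τ = σ/τ by ring,
      Real.arctan_neg, key2, show (1:ℝ)-σ^2 = τ^2 from hτ2.symm]
    field_simp
    ring
  rw [F1, F0]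
  unfold P
  rw [← hτdef, key2]
  field_simp
  ring

lemma denom_pos (σ t : ℝ) (hσ1 : σ^2 < 1) : (0:ℝ) < (1+t^2)^2-4*t^2*σ^2 := by
  nlinarith [mul_pos (sub_pos.2 hσ1) (pow_pos (show (0:ℝ) < 1+t^2 by positivity) 2),
    mul_nonneg (sq_nonneg σ) (sq_nonneg (1-t^2))]

lemma integrand_cont (σ : ℝ) (hσ1 : σ^2 < 1) :
    Continuous (fun t : ℝ => (1-t)^2*(1+t^2)*t/((1+t^2)^2-4*t^2*σ^2)^2) := by
  apply Continuous.div (by continuity) (by continuity)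
  intro t
  exact pow_ne_zero 2 (denom_pos σ t hσ1).ne'

lemma repr_lemma (σ : ℝ) (hσ0 : 0 < σ) (hσ1 : σ < 1) :
    P σ = -(16/π) * ∫ t in (0:ℝ)..1,
      (1 - t) ^ 2 * (1 + t ^ 2) * t / ((1 + t ^ 2) ^ 2 - 4 * t ^ 2 * σ ^ 2) ^ 2 := by
  have hs2 : (0:ℝ) < 1 - σ^2 := by nlinarith
  have hτ2 : (Real.sqrt (1-σ^2))^2 = 1 - σ^2 := Real.sq_sqrt hs2.le
  have hτ0 : 0 < Real.sqrt (1-σ^2) := Real.sqrt_pos.2 hs2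
  have hint : (∫ t in (0:ℝ)..1,
      (1-t)^2*(1+t^2)*t/((1+t^2)^2-4*t^2*σ^2)^2)
      = Faux σ (Real.sqrt (1-σ^2)) 1 - Faux σ (Real.sqrt (1-σ^2)) 0 := by
    apply intervalIntegral.integral_eq_sub_of_hasDerivAt
    · intro x _
      exact Faux_deriv σ _ hσ0 hσ1 hτ0 hτ2 x
    · exact (integrand_cont σ (by nlinarith)).intervalIntegrable 0 1
  rw [hint]
  exact eval_lemma σ hσ0 hσ1

theorem P_integral_repr :
    (∀ σ ∈ Set.Ioo (0:ℝ) 1,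
        P σ = -(16 / π) * ∫ t in (0:ℝ)..1,
          (1 - t) ^ 2 * (1 + t ^ 2) * t / ((1 + t ^ 2) ^ 2 - 4 * t ^ 2 * σ ^ 2) ^ 2) ∧
    (∀ σ ∈ Set.Ioo (0:ℝ) 1, P σ < 0) ∧
    StrictAntiOn P (Set.Ioo 0 1) := by
  have hrepr : ∀ σ ∈ Set.Ioo (0:ℝ) 1,
      P σ = -(16 / π) * ∫ t in (0:ℝ)..1,
        (1 - t) ^ 2 * (1 + t ^ 2) * t / ((1 + t ^ 2) ^ 2 - 4 * t ^ 2 * σ ^ 2) ^ 2 :=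
    fun σ hσ => repr_lemma σ hσ.1 hσ.2
  have hIpos : ∀ σ ∈ Set.Ioo (0:ℝ) 1, 0 < ∫ t in (0:ℝ)..1,
      (1 - t) ^ 2 * (1 + t ^ 2) * t / ((1 + t ^ 2) ^ 2 - 4 * t ^ 2 * σ ^ 2) ^ 2 := by
    intro σ hσ
    have hσ2 : σ^2 < 1 := by nlinarith [hσ.1, hσ.2]
    apply intervalIntegral.intervalIntegral_pos_of_pos_on
      ((integrand_cont σ hσ2).intervalIntegrable 0 1)
    · intro x hx
      have hD := denom_pos σ x hσ2
      have h1 : (0:ℝ) < 1 - x := by linarith [hx.2]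
      have h2 : (0:ℝ) < x := hx.1
      positivity
    · norm_num
  refine ⟨hrepr, fun σ hσ => ?_, ?_⟩
  · rw [hrepr σ hσ]
    have := hIpos σ hσ
    have hπ : (0:ℝ) < 16/π := by positivity
    nlinarith
  · intro σ₁ h₁ σ₂ h₂ h12
    rw [hrepr σ₁ h₁, hrepr σ₂ h₂]
    have hσ₁2 : σ₁^2 < 1 := by nlinarith [h₁.1, h₁.2]
    have hσ₂2 : σ₂^2 < 1 := by nlinarith [h₂.1, h₂.2]
    have hlt : (∫ t in (0:ℝ)..1,
        (1 - t) ^ 2 * (1 + t ^ 2) * t / ((1 + t ^ 2) ^ 2 - 4 * t ^ 2 * σ₁ ^ 2) ^ 2)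
        < ∫ t in (0:ℝ)..1,
        (1 - t) ^ 2 * (1 + t ^ 2) * t / ((1 + t ^ 2) ^ 2 - 4 * t ^ 2 * σ₂ ^ 2) ^ 2 := by
      apply intervalIntegral.integral_lt_integral_of_continuousOn_of_le_of_exists_lt
        one_pos (integrand_cont σ₁ hσ₁2).continuousOn (integrand_cont σ₂ hσ₂2).continuousOn
      · intro x hx
        have hD₁ := denom_pos σ₁ x hσ₁2
        have hD₂ := denom_pos σ₂ x hσ₂2
        have hnum : (0:ℝ) ≤ (1-x)^2*(1+x^2)*x := by
          have := hx.1.le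
          positivity
        apply div_le_div_of_nonneg_left hnum (by positivity)
        apply pow_le_pow_left₀ hD₂.le _ 2
        have hss : σ₁^2 ≤ σ₂^2 := by nlinarith [h₁.1]
        nlinarith [mul_nonneg (sq_nonneg x) (sub_nonneg.2 hss)]
      · refine ⟨1/2, by norm_num, ?_⟩
        have hD₁ := denom_pos σ₁ (1/2) hσ₁2
        have hD₂ := denom_pos σ₂ (1/2) hσ₂2
        have hnum : (0:ℝ) < (1-(1/2:ℝ))^2*(1+(1/2:ℝ)^2)*(1/2) := by norm_num
        apply div_lt_div_of_pos_left hnum (by positivity)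
        have hDlt : (1+((1:ℝ)/2)^2)^2-4*((1:ℝ)/2)^2*σ₂^2
            < (1+((1:ℝ)/2)^2)^2-4*((1:ℝ)/2)^2*σ₁^2 := by
          nlinarith [h₁.1, h₂.1]
        calc ((1+((1:ℝ)/2)^2)^2-4*((1:ℝ)/2)^2*σ₂^2)^2
            < ((1+((1:ℝ)/2)^2)^2-4*((1:ℝ)/2)^2*σ₁^2)^2 := by
              apply pow_lt_pow_left₀ hDlt hD₂.le
              norm_num
          _ = _ := rfl
    have hπ : (0:ℝ) < 16/π := by positivity
    nlinarith
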